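/- Let X be a real Hilbert space, f : X → X' Lipschitz (constant L) and strongly monotone (constant γ > 0) on a ball B_δ around a root x* of f. Let X_d ⊆ X be a closed subspace, and suppose the projected problem ⟨f(x_d), y⟩ = 0 for all y ∈ X_d has a solution x_d ∈ X_d ∩ B_δ. Then ‖x* − x_d‖ ≤ (L/γ) · d(x*, X_d), where d(x*, X_d) = inf_{y ∈ X_d} ‖y − x*‖. -/

import Mathlib

/-- Quasi-optimality of Galerkin (projected) solutions for a locally Lipschitz,
locally strongly monotone map (part 2 of the local Zarantonello theorem). -/
theorem stmt1 {X : Type*} [NormedAddCommGroup X] [InnerProductSpace ℝ X] [CompleteSpace X]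
    (f : X → X →L[ℝ] ℝ) (xstar : X) (δ L γ : ℝ) (hδ : 0 < δ) (hγ : 0 < γ)
    (hroot : f xstar = 0)
    (hLip : ∀ x₁ ∈ Metric.ball xstar δ, ∀ x₂ ∈ Metric.ball xstar δ,
      ‖f x₁ - f x₂‖ ≤ L * ‖x₁ - x₂‖)
    (hmono : ∀ x₁ ∈ Metric.ball xstar δ, ∀ x₂ ∈ Metric.ball xstar δ,
      (f x₁ - f x₂) (x₁ - x₂) ≥ γ * ‖x₁ - x₂‖ ^ 2)
    (Xd : Submodule ℝ X) (hXd : IsClosed (Xd : Set X))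
    (xd : X) (hxdmem : xd ∈ Xd) (hxdball : xd ∈ Metric.ball xstar δ)
    (hproj : ∀ y ∈ Xd, f xd y = 0) :
    ‖xstar - xd‖ ≤ (L / γ) * Metric.infDist xstar (Xd : Set X) := by
  have hsball : xstar ∈ Metric.ball xstar δ := Metric.mem_ball_self hδ
  set e := xstar - xd with he
  by_cases hne : xstar = xd
  · subst hne
    have h0 : Metric.infDist xstar (Xd : Set X) = 0 :=
      Metric.infDist_zero_of_mem hxdmem
    simp [h0, he]
  have hepos : 0 < ‖e‖ := by
    rw [norm_pos_iff]
    exact sub_ne_zero.mpr hne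
  -- key: γ‖e‖² ≤ L‖e‖‖xstar - y‖ for all y ∈ Xd
  have key : ∀ y ∈ Xd, γ * ‖e‖ ^ 2 ≤ L * ‖e‖ * ‖xstar - y‖ := by
    intro y hy
    have h1 : γ * ‖e‖ ^ 2 ≤ (f xstar - f xd) e := hmono xstar hsball xd hxdball
    have h2 : (f xstar - f xd) e = -(f xd e) := by
      simp [hroot]
    have h3 : f xd e = f xd (xstar - y) := by
      have : e = (xstar - y) + (y - xd) := by rw [he]; abel
      rw [this, map_add, hproj _ (Xd.sub_mem hy hxdmem), add_zero]
    have h4 : -(f xd e) ≤ ‖f xd‖ * ‖xstar - y‖ := by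
      rw [h3]
      calc -(f xd (xstar - y)) ≤ |f xd (xstar - y)| := neg_le_abs _
        _ = ‖f xd (xstar - y)‖ := rfl
        _ ≤ ‖f xd‖ * ‖xstar - y‖ := (f xd).le_opNorm _
    have h5 : ‖f xd‖ ≤ L * ‖e‖ := by
      have := hLip xstar hsball xd hxdball
      rw [hroot, zero_sub, norm_neg] at this
      exact this
    have h6 : ‖f xd‖ * ‖xstar - y‖ ≤ L * ‖e‖ * ‖xstar - y‖ :=
      mul_le_mul_of_nonneg_right h5 (norm_nonneg _)
    linarith [h1, h2 ▸ h1]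
  have hL : 0 < L := by
    by_contra h
    push_neg at h
    have hk := key xd hxdmem
    have hpos : 0 < γ * ‖e‖ ^ 2 := by positivity
    have hneg : L * ‖e‖ * ‖xstar - xd‖ ≤ 0 := by
      have h1 : 0 ≤ ‖e‖ * ‖xstar - xd‖ := mul_nonneg (norm_nonneg _) (norm_nonneg _)
      nlinarith
    linarith
  -- so γ/L * ‖e‖ ≤ dist xstar y for all y ∈ Xd
  have hinf : γ / L * ‖e‖ ≤ Metric.infDist xstar (Xd : Set X) := by
    by_contra hlt
    push_neg at hlt
    rw [Metric.infDist_lt_iff ⟨0, Xd.zero_mem⟩] at hlt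
    obtain ⟨y, hy, hd⟩ := hlt
    have hk := key y hy
    rw [dist_eq_norm] at hd
    have h2 : L * ‖e‖ * ‖xstar - y‖ < L * ‖e‖ * (γ / L * ‖e‖) :=
      mul_lt_mul_of_pos_left hd (mul_pos hL hepos)
    have h3 : L * ‖e‖ * (γ / L * ‖e‖) = γ * ‖e‖ ^ 2 := by field_simp
    linarith
  have heq : L / γ * (γ / L * ‖e‖) = ‖e‖ := by field_simp
  calc ‖xstar - xd‖ = L / γ * (γ / L * ‖e‖) := heq.symm
    _ ≤ L / γ * Metric.infDist xstar (Xd : Set X) :=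
        mul_le_mul_of_nonneg_left hinf (by positivity)
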